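/- Let φ be a bounded continuous solution of Lφ = μφ − φ² (L convolution with an even positive integrable kernel, Lc = c for constants) with μ < 1. Then either φ ≡ 0, or φ ≡ μ − 1, or μ − 1 < φ(x) < 1 for all x. -/

import Mathlib

open MeasureTheory

theorem whitham_solution_bounds (K : ℝ → ℝ) (μ : ℝ) (hμ : μ < 1)
    (hKe : ∀ x, K (-x) = K x) (hKpos : ∀ x, 0 < K x)
    (hKint : MeasureTheory.Integrable K) (hK1 : (∫ x, K x) = 1)
    (φ : ℝ → ℝ) (hc : Continuous φ) (hb : ∃ M, ∀ x, |φ x| ≤ M)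
    (heq : ∀ x, (∫ y, K (x-y) * φ y) = μ * φ x - φ x ^ 2) :
    (∀ x, φ x = 0) ∨ (∀ x, φ x = μ - 1) ∨ (∀ x, μ - 1 < φ x ∧ φ x < 1) := by
  obtain ⟨M, hM⟩ := hb
  -- integrability of translated kernel
  have hKx : ∀ x : ℝ, Integrable (fun y => K (x - y)) := fun x =>
    hKint.comp_sub_left x
  -- ∫ K(x - y) dy = 1
  have hKx1 : ∀ x : ℝ, (∫ y, K (x - y)) = 1 := by
    intro x
    rw [integral_sub_left_eq_self K _ x, hK1]
  -- integrability of K(x-y) φ y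
  have hmul : ∀ x : ℝ, Integrable (fun y => K (x - y) * φ y) := by
    intro x
    have := (hKx x).bdd_mul hc.aestronglyMeasurable (c := M) (Filter.Eventually.of_forall fun y => by
      simpa [Real.norm_eq_abs] using hM y)
    simpa [mul_comm] using this
  -- integrability of K(x-y) * c for constant c
  have hmulc : ∀ (x c : ℝ), Integrable (fun y => K (x - y) * c) :=
    fun x c => (hKx x).mul_const c
  have hmulc_int : ∀ (x c : ℝ), (∫ y, K (x - y) * c) = c := by
    intro x c
    rw [integral_mul_const, hKx1, one_mul]
  -- infimum of φ
  set m : ℝ := sInf (Set.range φ) with hm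
  have hbdd : BddBelow (Set.range φ) := by
    refine ⟨-M, ?_⟩
    rintro _ ⟨x, rfl⟩
    have := hM x
    have := abs_le.mp this
    linarith [this.1]
  have hmle : ∀ x, m ≤ φ x := fun x => csInf_le hbdd ⟨x, rfl⟩
  -- pointwise lower bound on the nonlinearity
  have hlow : ∀ x, m ≤ μ * φ x - φ x ^ 2 := by
    intro x
    rw [← heq x]
    calc m = ∫ y, K (x - y) * m := (hmulc_int x m).symm
      _ ≤ ∫ y, K (x - y) * φ y := by
          apply integral_mono (hmulc x m) (hmul x)
          intro y
          exact mul_le_mul_of_nonneg_left (hmle y) (hKpos _).le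
  -- m satisfies m ≤ μ m - m²
  have hmself : m ≤ μ * m - m ^ 2 := by
    have hcl : m ∈ closure (Set.range φ) :=
      csInf_mem_closure ⟨φ 0, 0, rfl⟩ hbdd
    have hcls : IsClosed {t : ℝ | m ≤ μ * t - t ^ 2} :=
      isClosed_le continuous_const (by continuity)
    have hsub : Set.range φ ⊆ {t : ℝ | m ≤ μ * t - t ^ 2} := by
      rintro _ ⟨x, rfl⟩; exact hlow x
    exact hcls.closure_subset_iff.mpr hsub hcl
  -- hence m ≥ μ - 1
  have hmge : μ - 1 ≤ m := by nlinarith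
  -- pointwise bounds μ - 1 ≤ φ x ≤ 1
  have hbnd : ∀ x, μ - 1 ≤ φ x ∧ φ x ≤ 1 := by
    intro x
    have h1 : μ - 1 ≤ μ * φ x - φ x ^ 2 := le_trans hmge (hlow x)
    constructor <;> nlinarith
  -- touching lemma: if φ x₀ = μ - 1 or φ x₀ = 1 then φ ≡ μ - 1
  have touch : ∀ x₀ : ℝ, (φ x₀ = μ - 1 ∨ φ x₀ = 1) → ∀ x, φ x = μ - 1 := by
    intro x₀ hx₀
    have hint0 : (∫ y, K (x₀ - y) * (φ y - (μ - 1))) = 0 := by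
      have hsplit : (fun y => K (x₀ - y) * (φ y - (μ - 1)))
          = fun y => K (x₀ - y) * φ y - K (x₀ - y) * (μ - 1) := by
        funext y; ring
      rw [hsplit, integral_sub (hmul x₀) (hmulc x₀ (μ - 1)), heq x₀,
        hmulc_int x₀ (μ - 1)]
      rcases hx₀ with h | h <;> rw [h] <;> ring
    have hnonneg : ∀ y, 0 ≤ K (x₀ - y) * (φ y - (μ - 1)) := by
      intro y
      exact mul_nonneg (hKpos _).le (by linarith [(hbnd y).1])
    have hintg : Integrable (fun y => K (x₀ - y) * (φ y - (μ - 1))) := by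
      have := (hmul x₀).sub (hmulc x₀ (μ - 1))
      apply this.congr
      filter_upwards with y
      simp [mul_sub]
    have hae : (fun y => K (x₀ - y) * (φ y - (μ - 1))) =ᵐ[volume] 0 :=
      (integral_eq_zero_iff_of_nonneg hnonneg hintg).mp hint0
    have hφae : φ =ᵐ[volume] fun _ => (μ - 1) := by
      filter_upwards [hae] with y hy
      have hK := hKpos (x₀ - y)
      have : φ y - (μ - 1) = 0 := by
        by_contra hne
        have : K (x₀ - y) * (φ y - (μ - 1)) ≠ 0 := mul_ne_zero (ne_of_gt hK) hne
        exact this hy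
      linarith
    have := (hc.ae_eq_iff_eq volume continuous_const).mp hφae
    intro x
    exact congrFun this x
  by_cases hex : ∃ x₀, φ x₀ = μ - 1 ∨ φ x₀ = 1
  · obtain ⟨x₀, hx₀⟩ := hex
    exact Or.inr (Or.inl (touch x₀ hx₀))
  · push_neg at hex
    refine Or.inr (Or.inr fun x => ?_)
    obtain ⟨h1, h2⟩ := hbnd x
    obtain ⟨hne1, hne2⟩ := hex x
    exact ⟨lt_of_le_of_ne h1 (Ne.symm hne1), lt_of_le_of_ne h2 hne2⟩
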